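/- Let B ∈ ℂ^{n×d} have full column rank, and let S ∈ ℂ^{s×n} be a subspace embedding with distortion ε ∈ (0,1) for the column span of B. Suppose SB = UT where U ∈ ℂ^{s×d} has orthonormal columns (U*U = I) and T ∈ ℂ^{d×d} is invertible. Then ((1−ε)/(1+ε))·κ₂(T) ≤ κ₂(B) ≤ ((1+ε)/(1−ε))·κ₂(T). -/

import Mathlib

open Matrix

noncomputable def nrm2 {n : ℕ} (v : Fin n → ℂ) : ℝ :=
  ‖(WithLp.equiv 2 (Fin n → ℂ)).symm v‖


noncomputable def sigmaMax {n d : ℕ} (M : Matrix (Fin n) (Fin d) ℂ) : ℝ :=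
  sSup {r : ℝ | ∃ y : Fin d → ℂ, nrm2 y = 1 ∧ r = nrm2 (M.mulVec y)}

noncomputable def sigmaMin {n d : ℕ} (M : Matrix (Fin n) (Fin d) ℂ) : ℝ :=
  sInf {r : ℝ | ∃ y : Fin d → ℂ, nrm2 y = 1 ∧ r = nrm2 (M.mulVec y)}

lemma nrm2_nonneg {n : ℕ} (v : Fin n → ℂ) : 0 ≤ nrm2 v := norm_nonneg _

lemma nrm2_mulVec_bound {n d : ℕ} (M : Matrix (Fin n) (Fin d) ℂ) :
    ∃ C : ℝ, 0 ≤ C ∧ ∀ v : Fin d → ℂ, nrm2 (M.mulVec v) ≤ C * nrm2 v := by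
  let f := (Matrix.toEuclideanLin M).toContinuousLinearMap
  refine ⟨‖f‖, norm_nonneg _, fun v => ?_⟩
  have := f.le_opNorm ((WithLp.equiv 2 (Fin d → ℂ)).symm v)
  simpa [nrm2, f, Matrix.toEuclideanLin_apply_piLp_toLp, WithLp.equiv_symm_apply] using this

lemma nrm2_unitary {s d : ℕ} (U : Matrix (Fin s) (Fin d) ℂ) (hU : Uᴴ * U = 1)
    (v : Fin d → ℂ) : nrm2 (U.mulVec v) = nrm2 v := by
  unfold nrm2
  rw [WithLp.equiv_symm_apply, WithLp.equiv_symm_apply, norm_eq_sqrt_re_inner (𝕜 := ℂ), norm_eq_sqrt_re_inner (𝕜 := ℂ),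
    EuclideanSpace.inner_toLp_toLp, EuclideanSpace.inner_toLp_toLp,
    Matrix.star_mulVec, dotProduct_comm (U *ᵥ v), Matrix.dotProduct_mulVec,
    Matrix.vecMul_vecMul, hU, Matrix.vecMul_one, dotProduct_comm (star v)]

lemma nrm2_single {d : ℕ} (i : Fin d) : nrm2 (Pi.single i (1 : ℂ)) = 1 := by
  unfold nrm2
  rw [WithLp.equiv_symm_apply, PiLp.norm_toLp_single]
  simp

set_option maxHeartbeats 1000000 in
theorem condition_number_diagnostic
    {n d s : ℕ} (B : Matrix (Fin n) (Fin d) ℂ) (hB : B.rank = d)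
    (S : Matrix (Fin s) (Fin n) ℂ) (ε : ℝ) (hε : ε ∈ Set.Ioo (0 : ℝ) 1)
    (hS : ∀ v ∈ Submodule.span ℂ (Set.range Bᵀ),
      (1 - ε) * nrm2 v ≤ nrm2 (S.mulVec v) ∧ nrm2 (S.mulVec v) ≤ (1 + ε) * nrm2 v)
    (U : Matrix (Fin s) (Fin d) ℂ) (T : Matrix (Fin d) (Fin d) ℂ)
    (hU : Uᴴ * U = 1) (hT : IsUnit T) (hQR : S * B = U * T) :
    (1 - ε) / (1 + ε) * (sigmaMax T / sigmaMin T) ≤ sigmaMax B / sigmaMin B ∧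
      sigmaMax B / sigmaMin B ≤ (1 + ε) / (1 - ε) * (sigmaMax T / sigmaMin T) := by
  obtain ⟨hε0, hε1⟩ := hε
  have h1e : (0:ℝ) < 1 - ε := by linarith
  have h2e : (0:ℝ) < 1 + ε := by linarith
  rcases Nat.eq_zero_or_pos d with hd | hd
  · subst hd
    have hempty : ∀ (m : ℕ) (M : Matrix (Fin m) (Fin 0) ℂ),
        {r : ℝ | ∃ y : Fin 0 → ℂ, nrm2 y = 1 ∧ r = nrm2 (M.mulVec y)} = ∅ := by
      intro m M
      ext r
      simp only [Set.mem_setOf_eq, Set.mem_empty_iff_false, iff_false]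
      rintro ⟨y, hy, -⟩
      unfold nrm2 at hy
      rw [Subsingleton.elim ((WithLp.equiv 2 (Fin 0 → ℂ)).symm y) 0, norm_zero] at hy
      exact zero_ne_one hy
    have eB1 : sigmaMax B = 0 := by unfold sigmaMax; rw [hempty]; exact Real.sSup_empty
    have eB2 : sigmaMin B = 0 := by unfold sigmaMin; rw [hempty]; exact Real.sInf_empty
    have eT1 : sigmaMax T = 0 := by unfold sigmaMax; rw [hempty]; exact Real.sSup_empty
    have eT2 : sigmaMin T = 0 := by unfold sigmaMin; rw [hempty]; exact Real.sInf_empty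
    rw [eB1, eB2, eT1, eT2]
    norm_num
  · -- notation for the two sets
    set AB := {r : ℝ | ∃ y : Fin d → ℂ, nrm2 y = 1 ∧ r = nrm2 (B.mulVec y)} with hAB
    set AT := {r : ℝ | ∃ y : Fin d → ℂ, nrm2 y = 1 ∧ r = nrm2 (T.mulVec y)} with hAT
    -- key comparison
    have key : ∀ y : Fin d → ℂ, nrm2 y = 1 →
        (1 - ε) * nrm2 (B.mulVec y) ≤ nrm2 (T.mulVec y) ∧
        nrm2 (T.mulVec y) ≤ (1 + ε) * nrm2 (B.mulVec y) := by
      intro y hy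
      have hmem : B.mulVec y ∈ Submodule.span ℂ (Set.range Bᵀ) := by
        rw [show Set.range Bᵀ = Set.range (Matrix.col B) from rfl, ← Matrix.range_mulVecLin]
        exact ⟨y, rfl⟩
      have hSB : S.mulVec (B.mulVec y) = U.mulVec (T.mulVec y) := by
        rw [Matrix.mulVec_mulVec, Matrix.mulVec_mulVec, hQR]
      have := hS (B.mulVec y) hmem
      rw [hSB, nrm2_unitary U hU] at this
      exact this
    -- unit vector exists
    have hone : (0:ℝ) < 1 := one_pos
    obtain ⟨y0, hy0⟩ : ∃ y : Fin d → ℂ, nrm2 y = 1 :=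
      ⟨Pi.single ⟨0, hd⟩ 1, nrm2_single _⟩
    have hABne : AB.Nonempty := ⟨_, y0, hy0, rfl⟩
    have hATne : AT.Nonempty := ⟨_, y0, hy0, rfl⟩
    -- bounded above
    obtain ⟨CB, hCB0, hCB⟩ := nrm2_mulVec_bound B
    obtain ⟨CT, hCT0, hCT⟩ := nrm2_mulVec_bound T
    have hABbdd : BddAbove AB := by
      refine ⟨CB, ?_⟩
      rintro r ⟨y, hy, rfl⟩
      simpa [hy] using hCB y
    have hATbdd : BddAbove AT := by
      refine ⟨CT, ?_⟩
      rintro r ⟨y, hy, rfl⟩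
      simpa [hy] using hCT y
    have hABbb : BddBelow AB := by
      refine ⟨0, ?_⟩; rintro r ⟨y, hy, rfl⟩; exact nrm2_nonneg _
    have hATbb : BddBelow AT := by
      refine ⟨0, ?_⟩; rintro r ⟨y, hy, rfl⟩; exact nrm2_nonneg _
    -- lower bound for ‖Ty‖
    have hTdet : IsUnit T.det := (Matrix.isUnit_iff_isUnit_det T).mp hT
    have hinv : T⁻¹ * T = 1 := Matrix.nonsing_inv_mul T hTdet
    obtain ⟨CI, hCI0, hCI⟩ := nrm2_mulVec_bound T⁻¹
    have hTlow : ∀ y : Fin d → ℂ, nrm2 y = 1 → 1 ≤ CI * nrm2 (T.mulVec y) := by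
      intro y hy
      have : T⁻¹.mulVec (T.mulVec y) = y := by
        rw [Matrix.mulVec_mulVec, hinv, Matrix.one_mulVec]
      have h2 := hCI (T.mulVec y)
      rw [this, hy] at h2
      exact h2
    have hCIpos : 0 < CI := by
      rcases lt_or_eq_of_le hCI0 with h | h
      · exact h
      · exfalso
        have := hTlow y0 hy0
        rw [← h] at this; simp at this; linarith
    -- sigma bounds
    have hmT : 1 / CI ≤ sigmaMin T := by
      apply le_csInf hATne
      rintro r ⟨y, hy, rfl⟩
      rw [div_le_iff₀ hCIpos]
      have := hTlow y hy
      nlinarith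
    have hmTpos : 0 < sigmaMin T := lt_of_lt_of_le (by positivity) hmT
    have hMTmB : sigmaMax T ≤ (1 + ε) * sigmaMax B := by
      apply Real.sSup_le
      · rintro r ⟨y, hy, rfl⟩
        have h1 := (key y hy).2
        have h2 : nrm2 (B.mulVec y) ≤ sigmaMax B := le_csSup hABbdd ⟨y, hy, rfl⟩
        nlinarith
      · have : 0 ≤ sigmaMax B :=
          le_trans (nrm2_nonneg _) (le_csSup hABbdd ⟨y0, hy0, rfl⟩)
        positivity
    have hMBMT : (1 - ε) * sigmaMax B ≤ sigmaMax T := by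
      have : sigmaMax B ≤ sigmaMax T / (1 - ε) := by
        apply Real.sSup_le
        · rintro r ⟨y, hy, rfl⟩
          have h1 := (key y hy).1
          have h2 : nrm2 (T.mulVec y) ≤ sigmaMax T := le_csSup hATbdd ⟨y, hy, rfl⟩
          rw [le_div_iff₀ h1e]
          nlinarith
        · have : 0 ≤ sigmaMax T :=
            le_trans (nrm2_nonneg _) (le_csSup hATbdd ⟨y0, hy0, rfl⟩)
          positivity
      calc (1 - ε) * sigmaMax B ≤ (1 - ε) * (sigmaMax T / (1 - ε)) := by nlinarith
        _ = sigmaMax T := by field_simp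
    have hmBmT : sigmaMin T / (1 + ε) ≤ sigmaMin B := by
      apply le_csInf hABne
      rintro r ⟨y, hy, rfl⟩
      have h1 := (key y hy).2
      have h2 : sigmaMin T ≤ nrm2 (T.mulVec y) := csInf_le hATbb ⟨y, hy, rfl⟩
      rw [div_le_iff₀ h2e]
      nlinarith
    have hmTmB : (1 - ε) * sigmaMin B ≤ sigmaMin T := by
      apply le_csInf hATne
      rintro r ⟨y, hy, rfl⟩
      have h1 := (key y hy).1
      have h2 : sigmaMin B ≤ nrm2 (B.mulVec y) := csInf_le hABbb ⟨y, hy, rfl⟩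
      nlinarith
    have hmBpos : 0 < sigmaMin B := lt_of_lt_of_le (by positivity) hmBmT
    have hMB0 : 0 ≤ sigmaMax B :=
      le_trans (nrm2_nonneg _) (le_csSup hABbdd ⟨y0, hy0, rfl⟩)
    have hMT0 : 0 ≤ sigmaMax T :=
      le_trans (nrm2_nonneg _) (le_csSup hATbdd ⟨y0, hy0, rfl⟩)
    have hmBmT' : sigmaMin T ≤ (1 + ε) * sigmaMin B := by
      rw [div_le_iff₀ h2e] at hmBmT; linarith [hmBmT]
    have hp1 : (0:ℝ) < (1 + ε) * sigmaMin T := by positivity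
    have hp2 : (0:ℝ) < (1 - ε) * sigmaMin T := by positivity
    constructor
    · rw [div_mul_div_comm, div_le_div_iff₀ hp1 hmBpos]
      nlinarith [mul_le_mul_of_nonneg_left hmTmB hMT0,
        mul_le_mul_of_nonneg_right hMTmB hmTpos.le]
    · rw [div_mul_div_comm, div_le_div_iff₀ hmBpos hp2]
      nlinarith [mul_le_mul_of_nonneg_left hmBmT' hMT0,
        mul_le_mul_of_nonneg_right hMBMT hmTpos.le]
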